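/- For X ~ McN(a,b,c,0,1), the random variable V = Φ(X)^c has the Beta(a,b) distribution; consequently E[log V] = ψ(a) - ψ(a+b), where ψ is the digamma function. -/

import Mathlib

open Real MeasureTheory

noncomputable def betaFn (a b : ℝ) : ℝ := ∫ t in (0:ℝ)..1, t ^ (a-1) * (1-t) ^ (b-1)

noncomputable def gaussPdf (x : ℝ) : ℝ := (Real.sqrt (2 * Real.pi))⁻¹ * Real.exp (-x^2/2)

noncomputable def stdNormCdf (x : ℝ) : ℝ := ∫ t in Set.Iic x, gaussPdf t

noncomputable def mcNStdPdf (a b c x : ℝ) : ℝ :=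
  (c / betaFn a b) * gaussPdf x * stdNormCdf x ^ (a*c - 1) * (1 - stdNormCdf x ^ c) ^ (b - 1)

noncomputable def betaPdf (a b v : ℝ) : ℝ :=
  if v ∈ Set.Ioo (0:ℝ) 1 then (1 / betaFn a b) * v ^ (a-1) * (1-v) ^ (b-1) else 0

/-- digamma function -/
noncomputable def digamma (x : ℝ) : ℝ := deriv (fun t => Real.log (Real.Gamma t)) x

open Set Filter intervalIntegral

lemma gaussPdf_pos (x : ℝ) : 0 < gaussPdf x := by
  have : 0 < Real.sqrt (2 * Real.pi) := Real.sqrt_pos.2 (by positivity)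
  exact mul_pos (inv_pos.2 this) (Real.exp_pos _)

lemma continuous_gaussPdf : Continuous gaussPdf := by
  unfold gaussPdf; fun_prop

lemma integrable_gaussPdf : Integrable gaussPdf := by
  have h : Integrable (fun x : ℝ => Real.exp (-(1/2) * x^2)) := integrable_exp_neg_mul_sq (by norm_num)
  have := h.const_mul (Real.sqrt (2 * Real.pi))⁻¹
  simp only [show ∀ x:ℝ, (-(1/2) * x^2) = -x^2/2 from fun x => by ring] at this
  exact this

lemma integral_gaussPdf : ∫ x, gaussPdf x = 1 := by
  have h : ∫ x : ℝ, Real.exp (-(1/2) * x^2) = Real.sqrt (Real.pi / (1/2)) :=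
    integral_gaussian (1/2)
  have h2 : ∫ x, gaussPdf x = (Real.sqrt (2 * Real.pi))⁻¹ * ∫ x : ℝ, Real.exp (-(1/2) * x^2) := by
    rw [← MeasureTheory.integral_const_mul]
    congr 1 with x
    simp only [gaussPdf, show (-(1/2) * x^2) = -x^2/2 from by ring]
  rw [h2, h]
  rw [show Real.pi / (1/2) = 2 * Real.pi by ring]
  rw [inv_mul_cancel₀]
  exact (Real.sqrt_pos.2 (by positivity)).ne'


lemma stdNormCdf_eq (x : ℝ) : stdNormCdf x = stdNormCdf 0 + ∫ t in (0:ℝ)..x, gaussPdf t := by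
  have h := intervalIntegral.integral_Iic_sub_Iic (f := gaussPdf) (μ := volume) (a := 0)
    (b := x) integrable_gaussPdf.integrableOn integrable_gaussPdf.integrableOn
  unfold stdNormCdf
  linarith

lemma hasDerivAt_stdNormCdf (x : ℝ) : HasDerivAt stdNormCdf (gaussPdf x) x := by
  have h : HasDerivAt (fun u => ∫ t in (0:ℝ)..u, gaussPdf t) (gaussPdf x) x := by
    refine intervalIntegral.integral_hasDerivAt_right
      integrable_gaussPdf.intervalIntegrable
      (continuous_gaussPdf.stronglyMeasurableAtFilter _ _)
      continuous_gaussPdf.continuousAt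
  have := h.const_add (stdNormCdf 0)
  exact this.congr_of_eventuallyEq (Eventually.of_forall fun y => (stdNormCdf_eq y))

lemma continuous_stdNormCdf : Continuous stdNormCdf :=
  continuous_iff_continuousAt.2 fun x => (hasDerivAt_stdNormCdf x).continuousAt

lemma strictMono_stdNormCdf : StrictMono stdNormCdf :=
  strictMono_of_deriv_pos (fun x => by
    rw [(hasDerivAt_stdNormCdf x).deriv]; exact gaussPdf_pos x)

lemma stdNormCdf_pos (x : ℝ) : 0 < stdNormCdf x := by
  have h1 : (0:ℝ) ≤ stdNormCdf (x - 1) :=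
    setIntegral_nonneg measurableSet_Iic (fun t _ => (gaussPdf_pos t).le)
  exact lt_of_le_of_lt h1 (strictMono_stdNormCdf (by linarith))

lemma stdNormCdf_le_one (x : ℝ) : stdNormCdf x ≤ 1 := by
  rw [← integral_gaussPdf]
  exact setIntegral_le_integral integrable_gaussPdf
    (Eventually.of_forall fun t => (gaussPdf_pos t).le)

lemma stdNormCdf_lt_one (x : ℝ) : stdNormCdf x < 1 :=
  lt_of_lt_of_le (strictMono_stdNormCdf (show x < x+1 by linarith)) (stdNormCdf_le_one (x+1))

lemma tendsto_stdNormCdf_atTop : Tendsto stdNormCdf atTop (nhds 1) := by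
  have hcov : AECover (volume : Measure ℝ) atTop (fun x : ℝ => Iic x) :=
    MeasureTheory.aecover_Iic tendsto_id
  have h := hcov.integral_tendsto_of_countably_generated integrable_gaussPdf
  rwa [integral_gaussPdf] at h

lemma stdNormCdf_add_Ioi (x : ℝ) : stdNormCdf x + ∫ t in Ioi x, gaussPdf t = 1 := by
  have h := intervalIntegral.integral_Iic_add_Ioi (b := x) (f := gaussPdf) (μ := volume)
    integrable_gaussPdf.integrableOn integrable_gaussPdf.integrableOn
  rw [← integral_gaussPdf]
  exact h

lemma tendsto_stdNormCdf_atBot : Tendsto stdNormCdf atBot (nhds 0) := by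
  have hcov : AECover (volume : Measure ℝ) atBot (fun x : ℝ => Ioi x) :=
    MeasureTheory.aecover_Ioi tendsto_id
  have h := hcov.integral_tendsto_of_countably_generated integrable_gaussPdf
  rw [integral_gaussPdf] at h
  have h2 : Tendsto (fun x : ℝ => 1 - ∫ t in Ioi x, gaussPdf t) atBot (nhds (1 - 1)) :=
    (tendsto_const_nhds).sub h
  simp only [sub_self] at h2
  refine h2.congr fun x => ?_
  have := stdNormCdf_add_Ioi x
  linarith


lemma beta_integrand_ae (p q : ℝ) :
    ∀ᵐ t : ℝ, t ∈ Set.uIoc (0:ℝ) 1 →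
      ((t:ℂ) ^ ((p:ℂ)-1) * (1-(t:ℂ)) ^ ((q:ℂ)-1)) = ((t ^ (p-1) * (1-t) ^ (q-1) : ℝ) : ℂ) := by
  refine Eventually.of_forall fun t ht => ?_
  rw [Set.uIoc_of_le zero_le_one] at ht
  have h1 : (0:ℝ) ≤ t := ht.1.le
  have h2 : (0:ℝ) ≤ 1 - t := by linarith [ht.2]
  rw [Complex.ofReal_mul, Complex.ofReal_cpow h1, Complex.ofReal_cpow h2]
  push_cast
  ring

lemma integrableOn_beta {p q : ℝ} (hp : 0 < p) (hq : 0 < q) :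
    IntervalIntegrable (fun t : ℝ => t ^ (p-1) * (1-t) ^ (q-1)) volume 0 1 := by
  have hC := Complex.betaIntegral_convergent (u := (p:ℂ)) (v := (q:ℂ)) (by simpa) (by simpa)
  rw [intervalIntegrable_iff] at hC ⊢
  have hC2 : IntegrableOn (fun t : ℝ => ((t ^ (p-1) * (1-t) ^ (q-1) : ℝ) : ℂ))
      (Set.uIoc (0:ℝ) 1) volume := by
    refine hC.congr ?_
    exact ((ae_restrict_iff' measurableSet_uIoc).2 (beta_integrand_ae p q))
  have := hC2.re
  refine this.congr (Eventually.of_forall fun t => ?_)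
  simp

lemma betaFn_eq {a b : ℝ} (ha : 0 < a) (hb : 0 < b) :
    betaFn a b = Real.Gamma a * Real.Gamma b / Real.Gamma (a + b) := by
  have key : ((betaFn a b : ℝ) : ℂ) = Complex.betaIntegral a b := by
    rw [betaFn, ← intervalIntegral.integral_ofReal, Complex.betaIntegral]
    exact intervalIntegral.integral_congr_ae
      ((beta_integrand_ae a b).mono fun t h ht => (h ht).symm)
  have hG := Complex.Gamma_mul_Gamma_eq_betaIntegral
    (s := (a:ℂ)) (t := (b:ℂ)) (by simpa) (by simpa)
  rw [← key, ← Complex.ofReal_add, Complex.Gamma_ofReal, Complex.Gamma_ofReal,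
    Complex.Gamma_ofReal, ← Complex.ofReal_mul, ← Complex.ofReal_mul] at hG
  have := Complex.ofReal_inj.1 hG
  have hpos : Real.Gamma (a + b) ≠ 0 := (Real.Gamma_pos_of_pos (by linarith)).ne'
  field_simp
  linarith [this]

lemma betaFn_pos {a b : ℝ} (ha : 0 < a) (hb : 0 < b) : 0 < betaFn a b := by
  rw [betaFn_eq ha hb]
  exact div_pos (mul_pos (Real.Gamma_pos_of_pos ha) (Real.Gamma_pos_of_pos hb))
    (Real.Gamma_pos_of_pos (by linarith))


/-- bound on |log| -/
lemma abs_log_le {t ε : ℝ} (ht : 0 < t) (ht1 : t ≤ 1) (hε : 0 < ε) :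
    |Real.log t| ≤ t ^ (-ε) / ε := by
  rw [abs_of_nonpos (Real.log_nonpos ht.le ht1), ← Real.log_inv]
  have := Real.log_le_rpow_div (x := t⁻¹) (by positivity) hε
  rwa [Real.inv_rpow ht.le, ← Real.rpow_neg ht.le] at this

lemma hasDerivAt_betaFn {a b : ℝ} (ha : 0 < a) (hb : 0 < b) :
    HasDerivAt (fun s => betaFn s b)
      (∫ t in (0:ℝ)..1, t ^ (a-1) * Real.log t * (1-t) ^ (b-1)) a := by
  have hmeas : ∀ s : ℝ, AEStronglyMeasurable (fun t : ℝ => t ^ (s-1) * (1-t) ^ (b-1))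
      (volume.restrict (Set.uIoc (0:ℝ) 1)) := by
    intro s
    apply Measurable.aestronglyMeasurable
    fun_prop
  have hmeas' : AEStronglyMeasurable (fun t : ℝ => t ^ (a-1) * Real.log t * (1-t) ^ (b-1))
      (volume.restrict (Set.uIoc (0:ℝ) 1)) := by
    apply Measurable.aestronglyMeasurable
    exact ((by fun_prop : Measurable fun t : ℝ => t ^ (a-1)).mul Real.measurable_log).mul
      (by fun_prop)
  have key := intervalIntegral.hasDerivAt_integral_of_dominated_loc_of_deriv_le
    (μ := volume) (a := 0) (b := 1) (x₀ := a) (s := Metric.ball a (a/4))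
    (F := fun s t => t ^ (s-1) * (1-t) ^ (b-1))
    (F' := fun s t => t ^ (s-1) * Real.log t * (1-t) ^ (b-1))
    (bound := fun t => (4/a) * (t ^ (a/2-1) * (1-t) ^ (b-1)))
    (Metric.ball_mem_nhds a (by positivity))
    (Eventually.of_forall fun s => hmeas s)
    (integrableOn_beta ha hb)
    hmeas'
    ?_ ?_ ?_
  · exact key.2
  · -- bound
    refine Eventually.of_forall fun t ht x hx => ?_
    rw [Set.uIoc_of_le zero_le_one] at ht
    have ht0 : 0 < t := ht.1
    have ht1 : t ≤ 1 := ht.2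
    have h1t : 0 ≤ 1 - t := by linarith
    rw [Metric.mem_ball, Real.dist_eq] at hx
    have hxa : 3*a/4 - 1 ≤ x - 1 := by
      have := abs_lt.1 hx
      linarith [this.1]
    have hb1 : (0:ℝ) ≤ (1-t) ^ (b-1) := Real.rpow_nonneg h1t _
    have e1 : t ^ (x-1) ≤ t ^ (3*a/4-1) :=
      Real.rpow_le_rpow_of_exponent_ge ht0 ht1 hxa
    have e2 : |Real.log t| ≤ t ^ (-(a/4)) / (a/4) := abs_log_le ht0 ht1 (by positivity)
    have e3 : ‖t ^ (x-1) * Real.log t * (1-t) ^ (b-1)‖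
        = t ^ (x-1) * |Real.log t| * (1-t) ^ (b-1) := by
      rw [Real.norm_eq_abs, abs_mul, abs_mul, abs_of_nonneg (Real.rpow_nonneg ht0.le _),
        abs_of_nonneg hb1]
    rw [e3]
    have e4 : t ^ (x-1) * |Real.log t| ≤ t ^ (3*a/4-1) * (t ^ (-(a/4)) / (a/4)) := by
      refine mul_le_mul e1 e2 (abs_nonneg _) (Real.rpow_nonneg ht0.le _)
    have e5 : t ^ (3*a/4-1) * (t ^ (-(a/4)) / (a/4)) = (4/a) * t ^ (a/2-1) := by
      have he : (3*a/4-1) + (-(a/4)) = a/2 - 1 := by ring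
      have h6 : t ^ (3*a/4-1) * t ^ (-(a/4)) = t ^ (a/2-1) := by
        rw [← Real.rpow_add ht0, he]
      rw [← mul_div_assoc, h6, div_div_eq_mul_div]
      ring
    calc t ^ (x-1) * |Real.log t| * (1-t) ^ (b-1)
        ≤ (t ^ (3*a/4-1) * (t ^ (-(a/4)) / (a/4))) * (1-t) ^ (b-1) :=
          mul_le_mul_of_nonneg_right e4 hb1
      _ = (4/a) * (t ^ (a/2-1) * (1-t) ^ (b-1)) := by rw [e5]; ring
  · exact (integrableOn_beta (by positivity : (0:ℝ) < a/2) hb).const_mul _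
  · -- differentiability
    refine Eventually.of_forall fun t ht x hx => ?_
    rw [Set.uIoc_of_le zero_le_one] at ht
    have ht0 : 0 < t := ht.1
    have h1 : HasDerivAt (fun x : ℝ => (x-1) * Real.log t) (Real.log t) x := by
      simpa using ((hasDerivAt_id x).sub_const 1).mul_const (Real.log t)
    have h2 := (Real.hasDerivAt_exp ((x-1) * Real.log t)).comp x h1
    have h3 : ∀ y : ℝ, Real.exp ((y-1) * Real.log t) = t ^ (y-1) := fun y => by
      rw [Real.rpow_def_of_pos ht0, mul_comm]
    have h4 : HasDerivAt (fun y : ℝ => t ^ (y-1))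
        (t ^ (x-1) * Real.log t) x := by
      have := h2.congr_of_eventuallyEq (Eventually.of_forall fun y => (h3 y).symm)
      rwa [h3] at this
    exact h4.mul_const _


lemma differentiableAt_logGamma {x : ℝ} (hx : 0 < x) :
    DifferentiableAt ℝ (fun t => Real.log (Real.Gamma t)) x := by
  refine DifferentiableAt.log ?_ (Real.Gamma_pos_of_pos hx).ne'
  refine Real.differentiableAt_Gamma fun m => ?_
  have : (0:ℝ) ≤ m := Nat.cast_nonneg m
  intro h; rw [h] at hx; linarith

lemma hasDerivAt_logGamma {x : ℝ} (hx : 0 < x) :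
    HasDerivAt (fun t => Real.log (Real.Gamma t)) (digamma x) x :=
  (differentiableAt_logGamma hx).hasDerivAt

lemma beta_log_integral {a b : ℝ} (ha : 0 < a) (hb : 0 < b) :
    ∫ t in (0:ℝ)..1, t ^ (a-1) * Real.log t * (1-t) ^ (b-1)
      = betaFn a b * (digamma a - digamma (a + b)) := by
  set I := ∫ t in (0:ℝ)..1, t ^ (a-1) * Real.log t * (1-t) ^ (b-1) with hI
  have hBpos := betaFn_pos ha hb
  have H1 : HasDerivAt (fun s => Real.log (betaFn s b)) (I / betaFn a b) a :=
    (hasDerivAt_betaFn ha hb).log hBpos.ne'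
  have hshift : HasDerivAt (fun s : ℝ => Real.log (Real.Gamma (s + b)))
      (digamma (a + b)) a := by
    have h := (hasDerivAt_logGamma (show 0 < a + b by linarith)).comp a
      ((hasDerivAt_id a).add_const b)
    simpa [Function.comp_def] using h
  have H2' : HasDerivAt
      (fun s : ℝ => Real.log (Real.Gamma s) + Real.log (Real.Gamma b)
        - Real.log (Real.Gamma (s + b)))
      (digamma a - digamma (a + b)) a :=
    ((hasDerivAt_logGamma ha).add_const _).sub hshift
  have hev : (fun s => Real.log (betaFn s b)) =ᶠ[nhds a]
      (fun s : ℝ => Real.log (Real.Gamma s) + Real.log (Real.Gamma b)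
        - Real.log (Real.Gamma (s + b))) := by
    filter_upwards [IsOpen.mem_nhds isOpen_Ioi ha] with s hs
    rw [betaFn_eq hs hb, Real.log_div
        (mul_pos (Real.Gamma_pos_of_pos hs) (Real.Gamma_pos_of_pos hb)).ne'
        (Real.Gamma_pos_of_pos (by simp at hs; linarith)).ne',
      Real.log_mul (Real.Gamma_pos_of_pos hs).ne' (Real.Gamma_pos_of_pos hb).ne']
  have H2 : HasDerivAt (fun s => Real.log (betaFn s b))
      (digamma a - digamma (a + b)) a := H2'.congr_of_eventuallyEq hev
  have := H1.unique H2
  field_simp at this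
  linarith [this]


section G
variable {c : ℝ}

lemma g_mem_Ioo (hc : 0 < c) (x : ℝ) : stdNormCdf x ^ c ∈ Set.Ioo (0:ℝ) 1 :=
  ⟨Real.rpow_pos_of_pos (stdNormCdf_pos x) c,
   Real.rpow_lt_one (stdNormCdf_pos x).le (stdNormCdf_lt_one x) hc⟩

lemma hasDerivAt_g (x : ℝ) :
    HasDerivAt (fun x => stdNormCdf x ^ c)
      (gaussPdf x * c * stdNormCdf x ^ (c-1)) x :=
  (hasDerivAt_stdNormCdf x).rpow_const (Or.inl (stdNormCdf_pos x).ne')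

lemma strictMono_g (hc : 0 < c) : StrictMono (fun x => stdNormCdf x ^ c) := fun x y hxy =>
  Real.rpow_lt_rpow (stdNormCdf_pos x).le (strictMono_stdNormCdf hxy) hc

lemma continuous_g : Continuous (fun x => stdNormCdf x ^ c) :=
  continuous_stdNormCdf.rpow_const (fun x => Or.inl (stdNormCdf_pos x).ne')

lemma tendsto_g_atBot (hc : 0 < c) : Tendsto (fun x => stdNormCdf x ^ c) atBot (nhds 0) := by
  have h := (Real.continuousAt_rpow_const 0 c (Or.inr hc.le)).tendsto.comp
    tendsto_stdNormCdf_atBot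
  rwa [Real.zero_rpow hc.ne'] at h

lemma tendsto_g_atTop (hc : 0 < c) : Tendsto (fun x => stdNormCdf x ^ c) atTop (nhds 1) := by
  have h := (Real.continuousAt_rpow_const 1 c (Or.inl one_ne_zero)).tendsto.comp
    tendsto_stdNormCdf_atTop
  rwa [Real.one_rpow] at h

lemma range_g (hc : 0 < c) : Set.range (fun x => stdNormCdf x ^ c) = Set.Ioo (0:ℝ) 1 := by
  apply Set.Subset.antisymm
  · rintro y ⟨x, rfl⟩; exact g_mem_Ioo hc x
  · rintro y ⟨hy0, hy1⟩
    obtain ⟨x₁, hx₁⟩ := ((tendsto_g_atBot hc).eventually_lt_const hy0).exists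
    obtain ⟨x₂, hx₂⟩ := ((tendsto_g_atTop hc).eventually_const_lt hy1).exists
    have hx12 : x₁ ≤ x₂ := ((strictMono_g hc).lt_iff_lt.1 (by linarith)).le
    obtain ⟨x, _, hx⟩ := intermediate_value_Icc hx12 (Continuous.continuousOn (continuous_g (c := c)))
      ⟨hx₁.le, hx₂.le⟩
    exact ⟨x, hx⟩
end G

section Main
variable {a b c : ℝ}

lemma mcN_pos (ha : 0 < a) (hb : 0 < b) (hc : 0 < c) (x : ℝ) : 0 < mcNStdPdf a b c x := by
  have h1 := stdNormCdf_pos x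
  have h2 := g_mem_Ioo hc x
  have hB := betaFn_pos ha hb
  unfold mcNStdPdf
  have h3 : 0 < 1 - stdNormCdf x ^ c := by linarith [h2.2]
  exact mul_pos (mul_pos (mul_pos (div_pos hc hB) (gaussPdf_pos x))
    (Real.rpow_pos_of_pos h1 _)) (Real.rpow_pos_of_pos h3 _)

lemma betaPdf_nonneg (ha : 0 < a) (hb : 0 < b) (v : ℝ) : 0 ≤ betaPdf a b v := by
  unfold betaPdf
  split_ifs with h
  · have hB := betaFn_pos ha hb
    have h1 : (0:ℝ) < v := h.1
    have h2 : (0:ℝ) < 1 - v := by linarith [h.2]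
    positivity
  · exact le_refl 0

lemma measurable_betaPdf (ha : 0 < a) (hb : 0 < b) : Measurable (betaPdf a b) := by
  unfold betaPdf
  exact Measurable.ite measurableSet_Ioo (by fun_prop) measurable_const

lemma continuous_mcN (ha : 0 < a) (hb : 0 < b) (hc : 0 < c) :
    Continuous (mcNStdPdf a b c) := by
  unfold mcNStdPdf
  refine ((continuous_const.mul continuous_gaussPdf).mul
    (continuous_stdNormCdf.rpow_const fun x => Or.inl (stdNormCdf_pos x).ne')).mul
    ((continuous_const.sub (continuous_g (c := c))).rpow_const fun x => Or.inl ?_)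
  have := (g_mem_Ioo hc x).2
  intro h; simp only [Pi.sub_apply] at h; linarith

lemma key_pointwise (ha : 0 < a) (hb : 0 < b) (hc : 0 < c) (x : ℝ) :
    ENNReal.ofReal |gaussPdf x * c * stdNormCdf x ^ (c-1)|
      * ENNReal.ofReal (betaPdf a b (stdNormCdf x ^ c))
      = ENNReal.ofReal (mcNStdPdf a b c x) := by
  have hΦ := stdNormCdf_pos x
  have hφ := gaussPdf_pos x
  have habs : (0:ℝ) ≤ gaussPdf x * c * stdNormCdf x ^ (c-1) := by positivity
  rw [abs_of_nonneg habs, ← ENNReal.ofReal_mul habs]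
  congr 1
  rw [betaPdf, if_pos (g_mem_Ioo hc x)]
  rw [mcNStdPdf]
  have e1 : (stdNormCdf x ^ c) ^ (a-1) = stdNormCdf x ^ (c*(a-1)) :=
    (Real.rpow_mul hΦ.le c (a-1)).symm
  have e2 : stdNormCdf x ^ (c-1) * stdNormCdf x ^ (c*(a-1)) = stdNormCdf x ^ (a*c-1) := by
    rw [← Real.rpow_add hΦ]; congr 1; ring
  rw [e1, show gaussPdf x * c * stdNormCdf x ^ (c-1)
      * (1 / betaFn a b * stdNormCdf x ^ (c*(a-1)) * (1 - stdNormCdf x ^ c) ^ (b-1))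
    = c / betaFn a b * gaussPdf x * (stdNormCdf x ^ (c-1) * stdNormCdf x ^ (c*(a-1)))
      * (1 - stdNormCdf x ^ c) ^ (b-1) from by ring, e2]

end Main

lemma map_eq (ha : 0 < a) (hb : 0 < b) (hc : 0 < c) :
    Measure.map (fun x => stdNormCdf x ^ c)
        ((volume : Measure ℝ).withDensity (fun x => ENNReal.ofReal (mcNStdPdf a b c x)))
      = (volume : Measure ℝ).withDensity (fun v => ENNReal.ofReal (betaPdf a b v)) := by
  have hg_meas : Measurable (fun x : ℝ => stdNormCdf x ^ c) := (continuous_g (c := c)).measurable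
  refine Measure.ext fun A hA => ?_
  rw [Measure.map_apply hg_meas hA, withDensity_apply _ (hg_meas hA), withDensity_apply _ hA]
  have hRHS : ∫⁻ v in A, ENNReal.ofReal (betaPdf a b v) ∂volume
      = ∫⁻ v in A ∩ Set.Ioo 0 1, ENNReal.ofReal (betaPdf a b v) ∂volume := by
    conv_lhs => rw [← Set.inter_union_diff A (Set.Ioo 0 1)]
    rw [lintegral_union (hA.diff measurableSet_Ioo) Set.disjoint_sdiff_inter.symm]
    have hz : ∫⁻ v in A \ Set.Ioo 0 1, ENNReal.ofReal (betaPdf a b v) ∂volume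
        = ∫⁻ _ in A \ Set.Ioo 0 1, (0:ENNReal) ∂volume := by
      refine setLIntegral_congr_fun (hA.diff measurableSet_Ioo)
        (fun v hv => ?_)
      rw [betaPdf, if_neg hv.2, ENNReal.ofReal_zero]
    rw [hz, lintegral_zero, add_zero]
  rw [hRHS]
  have himg : A ∩ Set.Ioo (0:ℝ) 1
      = (fun x => stdNormCdf x ^ c) '' ((fun x => stdNormCdf x ^ c) ⁻¹' A) := by
    rw [Set.image_preimage_eq_inter_range, range_g hc]
  rw [himg]
  have hcv := MeasureTheory.lintegral_image_eq_lintegral_abs_det_fderiv_mul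
    (volume : Measure ℝ) (hg_meas hA)
    (f' := fun x => (1 : ℝ →L[ℝ] ℝ).smulRight (gaussPdf x * c * stdNormCdf x ^ (c-1)))
    (fun x _ => ((hasDerivAt_g x).hasDerivWithinAt).hasFDerivWithinAt)
    ((strictMono_g hc).injective.injOn)
    (fun v => ENNReal.ofReal (betaPdf a b v))
  rw [hcv]
  refine setLIntegral_congr_fun (hg_meas hA) (fun x _ => ?_)
  rw [ContinuousLinearMap.smulRight_one_eq_toSpanSingleton, ContinuousLinearMap.det_toSpanSingleton]
  exact (key_pointwise ha hb hc x).symm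

lemma expect_log (ha : 0 < a) (hb : 0 < b) (hc : 0 < c) :
    ∫ x : ℝ, mcNStdPdf a b c x * Real.log (stdNormCdf x ^ c)
      = digamma a - digamma (a + b) := by
  have hg_meas : Measurable (fun x : ℝ => stdNormCdf x ^ c) := (continuous_g (c := c)).measurable
  have hmcN_meas : Measurable fun x => (mcNStdPdf a b c x).toNNReal :=
    (continuous_mcN ha hb hc).measurable.real_toNNReal
  have h1 : ∫ y, Real.log y ∂(Measure.map (fun x => stdNormCdf x ^ c)
          ((volume : Measure ℝ).withDensity fun x => ENNReal.ofReal (mcNStdPdf a b c x)))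
      = ∫ x : ℝ, mcNStdPdf a b c x * Real.log (stdNormCdf x ^ c) := by
    rw [integral_map hg_meas.aemeasurable Real.measurable_log.aestronglyMeasurable]
    have he : (fun x : ℝ => ENNReal.ofReal (mcNStdPdf a b c x))
        = fun x => ((mcNStdPdf a b c x).toNNReal : ENNReal) := rfl
    rw [he, integral_withDensity_eq_integral_smul hmcN_meas]
    congr 1 with x
    rw [NNReal.smul_def, Real.coe_toNNReal _ (mcN_pos ha hb hc x).le, smul_eq_mul]
  rw [← h1, map_eq ha hb hc]
  have hbeta_meas : Measurable fun v => (betaPdf a b v).toNNReal :=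
    (measurable_betaPdf ha hb).real_toNNReal
  have h2 : ∫ y, Real.log y
        ∂((volume : Measure ℝ).withDensity fun v => ENNReal.ofReal (betaPdf a b v))
      = ∫ v, betaPdf a b v * Real.log v := by
    have he : (fun v : ℝ => ENNReal.ofReal (betaPdf a b v))
        = fun v => ((betaPdf a b v).toNNReal : ENNReal) := rfl
    rw [he, integral_withDensity_eq_integral_smul hbeta_meas]
    congr 1 with v
    rw [NNReal.smul_def, Real.coe_toNNReal _ (betaPdf_nonneg ha hb v), smul_eq_mul]
  rw [h2]
  have h3 : (fun v => betaPdf a b v * Real.log v)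
      = Set.indicator (Set.Ioo 0 1)
          (fun v => (1 / betaFn a b) * (v ^ (a-1) * Real.log v * (1-v) ^ (b-1))) := by
    funext v
    rw [Set.indicator_apply, betaPdf]
    split_ifs with h
    · ring
    · simp
  rw [h3, MeasureTheory.integral_indicator measurableSet_Ioo, ← integral_Ioc_eq_integral_Ioo,
    ← intervalIntegral.integral_of_le zero_le_one, intervalIntegral.integral_const_mul,
    beta_log_integral ha hb]
  rw [one_div, inv_mul_eq_div, mul_div_cancel_left₀ _ (betaFn_pos ha hb).ne']

/-- If X ~ McN(a,b,c,0,1) then V = Φ(X)^c ~ Beta(a,b), and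
E[log V] = ψ(a) - ψ(a+b). -/
theorem mcN_transform_is_beta (a b c : ℝ) (ha : 0 < a) (hb : 0 < b) (hc : 0 < c) :
    Measure.map (fun x => stdNormCdf x ^ c)
        ((volume : Measure ℝ).withDensity (fun x => ENNReal.ofReal (mcNStdPdf a b c x)))
      = (volume : Measure ℝ).withDensity (fun v => ENNReal.ofReal (betaPdf a b v))
    ∧ ∫ x : ℝ, mcNStdPdf a b c x * Real.log (stdNormCdf x ^ c)
        = digamma a - digamma (a + b) := by
  exact ⟨map_eq ha hb hc, expect_log ha hb hc⟩
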